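/- Let R be a commutative semiring and F a decomposable sum-product expression over R whose scope is all of ι. Define Z(F) ∈ R recursively: Z of a constant leaf c is c; Z of a leaf (i, φ) is ∑_{t ∈ X i} φ t; Z of a Product node is the product of the Z-values of its children; Z of a Sum node v with children G₁, …, G_m is ∑_k (∏_{i ∈ scope(v) \ scope(G_k)} |X i|) • Z(G_k), where • denotes the natural-number scalar action on R. Then ∑_{x : ∀ i, X i} eval F x = Z(F). -/

import Mathlib

open Finset

/-- A sum-product expression (SPF) over a commutative semiring `R` in variables
indexed by `ι` with domains `X i`: a leaf is a constant `c : R` or a pair of an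
index `i` and a univariate function `φ : X i → R`; internal nodes are Sum or
Product nodes with a finite list of children. -/
inductive SPF (R : Type) (ι : Type) (X : ι → Type) where
  | const : R → SPF R ι X
  | leaf : (i : ι) → (X i → R) → SPF R ι X
  | sum : List (SPF R ι X) → SPF R ι X
  | prod : List (SPF R ι X) → SPF R ι X

namespace SPF

variable {R : Type} [CommSemiring R] {ι : Type} [DecidableEq ι] {X : ι → Type}

/-- Evaluation of an SPF at a full assignment. -/
def eval : SPF R ι X → ((i : ι) → X i) → R
  | .const c, _ => c
  | .leaf i φ, x => φ (x i)
  | .sum l, x => (l.attach.map fun c => c.1.eval x).sum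
  | .prod l, x => (l.attach.map fun c => c.1.eval x).prod
decreasing_by all_goals (simp_wf; have := List.sizeOf_lt_of_mem c.2; omega)

/-- The scope of an SPF: the finite set of variable indices appearing in its leaves. -/
def scope : SPF R ι X → Finset ι
  | .const _ => ∅
  | .leaf i _ => {i}
  | .sum l => (l.attach.map fun c => c.1.scope).foldr (· ∪ ·) ∅
  | .prod l => (l.attach.map fun c => c.1.scope).foldr (· ∪ ·) ∅
decreasing_by all_goals (simp_wf; have := List.sizeOf_lt_of_mem c.2; omega)

/-- An SPF is decomposable iff the children of every Product node have
pairwise disjoint scopes. -/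
inductive Decomposable : SPF R ι X → Prop
  | const (c : R) : Decomposable (.const c)
  | leaf (i : ι) (φ : X i → R) : Decomposable (.leaf i φ)
  | sum {l : List (SPF R ι X)} :
      (∀ G ∈ l, Decomposable G) → Decomposable (.sum l)
  | prod {l : List (SPF R ι X)} :
      (∀ G ∈ l, Decomposable G) →
      l.Pairwise (fun G H => Disjoint G.scope H.scope) →
      Decomposable (.prod l)

/-- The recursive bottom-up summation `Z` of an SPF: constants map to themselves,
a leaf `(i, φ)` to `∑ t : X i, φ t`, a Product node to the product of its
children's values, and a Sum node to the sum of its children's values, each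
scaled (by natural-number scalar action) by the cardinality of the domain of the
variables in the node's scope missing from that child's scope. -/
def Z [∀ i, Fintype (X i)] : SPF R ι X → R
  | .const c => c
  | .leaf _ φ => ∑ t, φ t
  | .prod l => (l.attach.map fun c => c.1.Z).prod
  | .sum l => (l.attach.map fun c =>
      (∏ i ∈ (SPF.sum l).scope \ c.1.scope, Fintype.card (X i)) • c.1.Z).sum
decreasing_by all_goals (simp_wf; have := List.sizeOf_lt_of_mem c.2; omega)

end SPF

section Aux

variable {R : Type} [CommSemiring R] {ι : Type} [Fintype ι] [DecidableEq ι]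
  {X : ι → Type} [∀ i, Fintype (X i)]

/-- Assignments agreeing with `x₀` outside `U`. -/
def fullSet (x₀ : (i : ι) → X i) (U : Finset ι) : Finset ((i : ι) → X i) :=
  Fintype.piFinset fun i => if i ∈ U then Finset.univ else {x₀ i}

lemma mem_fullSet {x₀ : (i : ι) → X i} {U : Finset ι} {x : (i : ι) → X i} :
    x ∈ fullSet x₀ U ↔ ∀ i ∉ U, x i = x₀ i := by
  simp only [fullSet, Fintype.mem_piFinset]
  constructor
  · intro h i hi
    have := h i
    simp [hi] at this
    exact this
  · intro h i
    by_cases hi : i ∈ U <;> simp [hi, h]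

lemma card_fullSet (x₀ : (i : ι) → X i) (U : Finset ι) :
    (fullSet x₀ U).card = ∏ i ∈ U, Fintype.card (X i) := by
  rw [fullSet, Fintype.card_piFinset]
  have : ∀ i : ι, ((if i ∈ U then Finset.univ else {x₀ i}) : Finset (X i)).card
      = if i ∈ U then Fintype.card (X i) else 1 := by
    intro i; split <;> simp
  simp_rw [this]
  rw [Finset.prod_ite_mem, Finset.univ_inter]

/-- `f` depends only on the variables in `S`. -/
def DepOn {α : Type} (S : Finset ι) (f : ((i : ι) → X i) → α) : Prop :=
  ∀ x y, (∀ i ∈ S, x i = y i) → f x = f y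

lemma sum_fullSet_mul {x₀ : (i : ι) → X i} {S T : Finset ι}
    {f g : ((i : ι) → X i) → R}
    (hST : Disjoint S T) (hf : DepOn S f) (hg : DepOn T g) :
    ∑ x ∈ fullSet x₀ (S ∪ T), f x * g x =
      (∑ x ∈ fullSet x₀ S, f x) * ∑ x ∈ fullSet x₀ T, g x := by
  rw [Finset.sum_mul_sum, ← Finset.sum_product']
  refine Finset.sum_bij' (fun u _ => (S.piecewise u x₀, S.piecewise x₀ u))
    (fun p _ => S.piecewise p.1 p.2) ?_ ?_ ?_ ?_ ?_ <;> try dsimp only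
  · intro u hu
    rw [mem_fullSet] at hu
    rw [Finset.mem_product, mem_fullSet, mem_fullSet]
    dsimp only
    constructor
    · intro i hi; exact S.piecewise_eq_of_notMem _ _ hi
    · intro i hi
      by_cases hiS : i ∈ S
      · exact S.piecewise_eq_of_mem _ _ hiS
      · rw [S.piecewise_eq_of_notMem _ _ hiS]
        exact hu i (by simp [hiS, hi])
  · intro p hp
    rw [Finset.mem_product, mem_fullSet, mem_fullSet] at hp
    rw [mem_fullSet]
    intro i hi
    simp only [Finset.mem_union, not_or] at hi
    rw [S.piecewise_eq_of_notMem _ _ hi.1]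
    exact hp.2 i hi.2
  · intro u hu
    rw [mem_fullSet] at hu
    funext i
    by_cases hiS : i ∈ S
    · rw [S.piecewise_eq_of_mem _ _ hiS, S.piecewise_eq_of_mem _ _ hiS]
    · rw [S.piecewise_eq_of_notMem _ _ hiS, S.piecewise_eq_of_notMem _ _ hiS]
  · intro p hp
    rw [Finset.mem_product, mem_fullSet, mem_fullSet] at hp
    have h1 : S.piecewise (S.piecewise p.1 p.2) x₀ = p.1 := by
      funext i
      by_cases hiS : i ∈ S
      · rw [S.piecewise_eq_of_mem _ _ hiS, S.piecewise_eq_of_mem _ _ hiS]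
      · rw [S.piecewise_eq_of_notMem _ _ hiS, hp.1 i hiS]
    have h2 : S.piecewise x₀ (S.piecewise p.1 p.2) = p.2 := by
      funext i
      by_cases hiS : i ∈ S
      · rw [S.piecewise_eq_of_mem _ _ hiS,
          hp.2 i (Finset.disjoint_left.mp hST hiS)]
      · rw [S.piecewise_eq_of_notMem _ _ hiS, S.piecewise_eq_of_notMem _ _ hiS]
    rw [h1, h2]
  · intro u hu
    have hfu : f u = f (S.piecewise u x₀) :=
      hf _ _ fun i hi => (S.piecewise_eq_of_mem _ _ hi).symm
    have hgu : g u = g (S.piecewise x₀ u) := by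
      refine hg _ _ fun i hi => ?_
      rw [S.piecewise_eq_of_notMem _ _ (Finset.disjoint_right.mp hST hi)]
    rw [hfu, hgu]

lemma sum_fullSet_subset {x₀ : (i : ι) → X i} {S T : Finset ι}
    {f : ((i : ι) → X i) → R} (hST : S ⊆ T) (hf : DepOn S f) :
    ∑ x ∈ fullSet x₀ T, f x
      = (∏ i ∈ T \ S, Fintype.card (X i)) • ∑ x ∈ fullSet x₀ S, f x := by
  have h1 : S ∪ (T \ S) = T := Finset.union_sdiff_of_subset hST
  have h2 : Disjoint S (T \ S) := Finset.disjoint_sdiff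
  have h3 := sum_fullSet_mul (x₀ := x₀) (f := f) (g := fun _ => (1 : R)) h2 hf
    (fun _ _ _ => rfl)
  simp only [mul_one] at h3
  conv_lhs => rw [← h1]
  rw [h3, Finset.sum_const, card_fullSet]
  simp [nsmul_eq_mul, mul_comm]

end Aux

namespace SPF

set_option linter.unusedSectionVars false

variable {R : Type} [CommSemiring R] {ι : Type} [DecidableEq ι] {X : ι → Type}

lemma eval_sum (l : List (SPF R ι X)) (x : (i : ι) → X i) :
    (SPF.sum l).eval x = (l.map (·.eval x)).sum := by
  rw [eval]; exact congrArg List.sum (List.attach_map_val (l := l) (f := fun G => G.eval x))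

lemma eval_prod (l : List (SPF R ι X)) (x : (i : ι) → X i) :
    (SPF.prod l).eval x = (l.map (·.eval x)).prod := by
  rw [eval]; exact congrArg List.prod (List.attach_map_val (l := l) (f := fun G => G.eval x))

lemma scope_sum (l : List (SPF R ι X)) :
    (SPF.sum l).scope = (l.map scope).foldr (· ∪ ·) ∅ := by
  rw [scope]; exact congrArg _ (List.attach_map_val (l := l) (f := scope))

lemma scope_prod (l : List (SPF R ι X)) :
    (SPF.prod l).scope = (l.map scope).foldr (· ∪ ·) ∅ := by
  rw [scope]; exact congrArg _ (List.attach_map_val (l := l) (f := scope))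

lemma Z_sum [∀ i, Fintype (X i)] (l : List (SPF R ι X)) :
    (SPF.sum l).Z = (l.map fun G =>
      (∏ i ∈ (SPF.sum l).scope \ G.scope, Fintype.card (X i)) • G.Z).sum := by
  rw [Z]
  exact congrArg List.sum (List.attach_map_val (l := l) (f := fun G =>
    (∏ i ∈ (SPF.sum l).scope \ G.scope, Fintype.card (X i)) • G.Z))

lemma Z_prod [∀ i, Fintype (X i)] (l : List (SPF R ι X)) :
    (SPF.prod l).Z = (l.map Z).prod := by
  rw [Z]; exact congrArg List.prod (List.attach_map_val (l := l) (f := Z))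

lemma subset_foldr {l : List (SPF R ι X)} {G : SPF R ι X} (hG : G ∈ l) :
    G.scope ⊆ (l.map scope).foldr (· ∪ ·) ∅ := by
  induction l with
  | nil => cases hG
  | cons H t ih =>
    simp only [List.map_cons, List.foldr_cons]
    rcases List.mem_cons.mp hG with rfl | h
    · exact Finset.subset_union_left
    · exact (ih h).trans Finset.subset_union_right

lemma disjoint_foldr {s : Finset ι} {l : List (SPF R ι X)}
    (h : ∀ H ∈ l, Disjoint s H.scope) :
    Disjoint s ((l.map scope).foldr (· ∪ ·) ∅) := by
  induction l with
  | nil => simp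
  | cons H t ih =>
    simp only [List.map_cons, List.foldr_cons, Finset.disjoint_union_right]
    exact ⟨h H (.head _), ih fun K hK => h K (.tail _ hK)⟩

lemma eval_depOn : ∀ (F : SPF R ι X) (x y : (i : ι) → X i),
    (∀ i ∈ F.scope, x i = y i) → F.eval x = F.eval y
  | .const c, x, y, h => by simp only [eval]
  | .leaf i φ, x, y, h => by
      simp only [eval]
      exact congrArg φ (h i (by rw [scope]; exact Finset.mem_singleton_self i))
  | .sum l, x, y, h => by
      rw [eval_sum, eval_sum]
      congr 1
      refine List.map_congr_left fun G hG => eval_depOn G x y fun i hi => h i ?_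
      rw [scope_sum]
      exact subset_foldr hG hi
  | .prod l, x, y, h => by
      rw [eval_prod, eval_prod]
      congr 1
      refine List.map_congr_left fun G hG => eval_depOn G x y fun i hi => h i ?_
      rw [scope_prod]
      exact subset_foldr hG hi
termination_by F => sizeOf F
decreasing_by all_goals (simp_wf; have := List.sizeOf_lt_of_mem hG; omega)

end SPF

namespace SPF

set_option linter.unusedSectionVars false

variable {R : Type} [CommSemiring R] {ι : Type} [Fintype ι] [DecidableEq ι]
  {X : ι → Type} [∀ i, Fintype (X i)]

lemma list_sum_swap (s : Finset ((i : ι) → X i)) (l : List (SPF R ι X)) :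
    ∑ x ∈ s, (l.map (·.eval x)).sum = (l.map fun G => ∑ x ∈ s, G.eval x).sum := by
  induction l with
  | nil => simp
  | cons H t ih => simp [Finset.sum_add_distrib, ih]

lemma depOn_listProd (t : List (SPF R ι X)) :
    DepOn ((t.map scope).foldr (· ∪ ·) ∅) (fun x => (t.map (·.eval x)).prod) := by
  intro x y h
  dsimp only
  congr 1
  exact List.map_congr_left fun G hG => eval_depOn G x y fun i hi => h i (subset_foldr hG hi)

lemma key_prodList (x₀ : (i : ι) → X i) : ∀ (l : List (SPF R ι X)),
    l.Pairwise (fun G H => Disjoint G.scope H.scope) →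
    (∀ G ∈ l, ∑ x ∈ fullSet x₀ G.scope, G.eval x = G.Z) →
    ∑ x ∈ fullSet x₀ ((l.map scope).foldr (· ∪ ·) ∅), (l.map (·.eval x)).prod
      = (l.map Z).prod
  | [], _, _ => by simp [Finset.sum_const, card_fullSet]
  | H :: t, hpw, hG => by
      simp only [List.map_cons, List.foldr_cons, List.prod_cons]
      have hd : Disjoint H.scope ((t.map scope).foldr (· ∪ ·) ∅) :=
        disjoint_foldr fun K hK => (List.pairwise_cons.mp hpw).1 K hK
      rw [sum_fullSet_mul hd (fun x y h => eval_depOn H x y h) (depOn_listProd t),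
        hG H (List.mem_cons_self (a := H) (l := t)),
        key_prodList x₀ t (List.pairwise_cons.mp hpw).2
          (fun G hGl => hG G (List.mem_cons_of_mem _ hGl))]

lemma key (x₀ : (i : ι) → X i) :
    ∀ (F : SPF R ι X), F.Decomposable → ∑ x ∈ fullSet x₀ F.scope, F.eval x = F.Z
  | .const c, _ => by
      simp only [eval, Z, scope]
      rw [Finset.sum_const, card_fullSet]
      simp
  | .leaf i φ, _ => by
      simp only [eval, Z, scope]
      refine Finset.sum_bij' (fun x _ => x i) (fun t _ => Function.update x₀ i t)
        ?_ ?_ ?_ ?_ ?_ <;> try dsimp only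
      · intro x hx; exact Finset.mem_univ _
      · intro t _
        rw [mem_fullSet]
        intro j hj
        exact Function.update_of_ne (by simpa using hj) _ _
      · intro x hx
        rw [mem_fullSet] at hx
        funext j
        by_cases hj : j = i
        · subst hj; simp
        · rw [Function.update_of_ne hj]
          exact (hx j (by simpa using hj)).symm
      · intro t _; simp
      · intro x hx; rfl
  | .sum l, hdec => by
      have hdec' : ∀ G ∈ l, Decomposable G := by
        cases hdec with | sum h => exact h
      have hG : ∀ G ∈ l, ∑ x ∈ fullSet x₀ G.scope, G.eval x = G.Z :=
        fun G hGl => key x₀ G (hdec' G hGl)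
      rw [Z_sum]
      simp only [eval_sum]
      rw [list_sum_swap]
      congr 1
      refine List.map_congr_left fun G hGl => ?_
      rw [sum_fullSet_subset (x₀ := x₀) (T := (SPF.sum l).scope)
        (by rw [scope_sum]; exact subset_foldr hGl) (fun x y h => eval_depOn G x y h),
        hG G hGl]
  | .prod l, hdec => by
      have hdec' : ∀ G ∈ l, Decomposable G := by
        cases hdec with | prod h _ => exact h
      have hpw : l.Pairwise (fun G H => Disjoint G.scope H.scope) := by
        cases hdec with | prod _ h => exact h
      have hG : ∀ G ∈ l, ∑ x ∈ fullSet x₀ G.scope, G.eval x = G.Z :=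
        fun G hGl => key x₀ G (hdec' G hGl)
      rw [Z_prod, scope_prod]
      simp only [eval_prod]
      exact key_prodList x₀ l hpw hG
termination_by F _ => sizeOf F
decreasing_by all_goals (simp_wf; have := List.sizeOf_lt_of_mem hGl; omega)

end SPF


/-- **The sum-product theorem** (Theorem 1): the sum of a decomposable SPF with
full scope over all assignments equals its linear-time bottom-up summation `Z`. -/
theorem sum_product_theorem {R : Type} [CommSemiring R] {ι : Type} [Fintype ι]
    [DecidableEq ι] {X : ι → Type} [∀ i, Fintype (X i)] [∀ i, Nonempty (X i)]
    (F : SPF R ι X) (hdec : F.Decomposable) (hscope : F.scope = Finset.univ) :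
    ∑ x : (i : ι) → X i, F.eval x = F.Z := by
  have x₀ : (i : ι) → X i := fun i => Classical.arbitrary _
  have huniv : fullSet x₀ Finset.univ = Finset.univ := by
    ext x; simp [mem_fullSet]
  have h := SPF.key x₀ F hdec
  rw [hscope, huniv] at h
  exact h
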